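/- If a trace-preserving completely positive map A on an n-dimensional Hilbert space maps n+1 pure states in general position to pure states in general position, then A is unitary: Aρ = U†ρU for some unitary U. -/

import Mathlib

open scoped Matrix

/-- Vectors x₁,…,x_{n+1} in ℂⁿ are in general position if any n of them are
linearly independent. -/
def InGeneralPosition {n : ℕ} (x : Fin (n + 1) → (Fin n → ℂ)) : Prop :=
  ∀ s : Finset (Fin (n + 1)), s.card = n →
    LinearIndependent ℂ (fun i : s => x i.1)

section Aux

open Matrix
open scoped ComplexOrder

/-- quadratic form of a rank-one matrix -/
lemma aux_quad {n : ℕ} (u v r : Fin n → ℂ) :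
    star r ⬝ᵥ (Matrix.vecMulVec u v).mulVec r = (star r ⬝ᵥ u) * (v ⬝ᵥ r) := by
  simp only [Matrix.mulVec, dotProduct, Matrix.vecMulVec_apply, Finset.mul_sum,
    Finset.sum_mul]
  rw [Finset.sum_comm]
  exact Finset.sum_congr rfl fun j _ => Finset.sum_congr rfl fun k _ => by ring

/-- quadratic form of a sum of matrices -/
lemma aux_sum_quad {n m : ℕ} (M : Fin m → Matrix (Fin n) (Fin n) ℂ) (r : Fin n → ℂ) :
    star r ⬝ᵥ (∑ i, M i).mulVec r = ∑ i, star r ⬝ᵥ (M i).mulVec r := by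
  simp only [dotProduct, Matrix.mulVec, Matrix.sum_apply, Finset.sum_mul,
    Finset.mul_sum]
  calc ∑ j, ∑ k, ∑ i, star r j * (M i j k * r k)
      = ∑ j, ∑ i, ∑ k, star r j * (M i j k * r k) :=
        Finset.sum_congr rfl fun j _ => Finset.sum_comm
    _ = ∑ i, ∑ j, ∑ k, star r j * (M i j k * r k) := Finset.sum_comm

/-- A sum of rank-one psd matrices equal to a rank-one psd matrix forces each
vector to be a multiple of `y`. -/
lemma aux_rank_one {n m : ℕ} (w : Fin m → (Fin n → ℂ)) (y : Fin n → ℂ)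
    (hy : star y ⬝ᵥ y = 1)
    (h : ∑ i, Matrix.vecMulVec (w i) (star (w i)) = Matrix.vecMulVec y (star y)) :
    ∀ i, w i = (star y ⬝ᵥ w i) • y := by
  intro i
  set c : ℂ := star y ⬝ᵥ w i with hcdef
  set r : Fin n → ℂ := w i - c • y with hrdef
  have hyr : star y ⬝ᵥ r = 0 := by
    simp [hrdef, dotProduct_sub, dotProduct_smul, hy, smul_eq_mul, ← hcdef]
  have hry : star r ⬝ᵥ y = 0 := by
    rw [Matrix.star_dotProduct, hyr]; simp
  have key : ∑ i', (star r ⬝ᵥ w i') * star (star r ⬝ᵥ w i') = 0 := by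
    have h2 := congrArg (fun M : Matrix (Fin n) (Fin n) ℂ => star r ⬝ᵥ M.mulVec r) h
    have hL : star r ⬝ᵥ (∑ i', Matrix.vecMulVec (w i') (star (w i'))).mulVec r
        = ∑ i', (star r ⬝ᵥ w i') * (star (w i') ⬝ᵥ r) := by
      rw [aux_sum_quad]
      exact Finset.sum_congr rfl fun i' _ => aux_quad _ _ _
    have hR : star r ⬝ᵥ (Matrix.vecMulVec y (star y)).mulVec r = 0 := by
      rw [aux_quad, hry, zero_mul]
    rw [hL, hR] at h2
    rw [← h2]
    refine Finset.sum_congr rfl fun i' _ => ?_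
    congr 1
    rw [Matrix.star_dotProduct, star_star]
  have key2 : ∀ i', (star r ⬝ᵥ w i') = 0 := by
    have hre : ∑ i', Complex.normSq (star r ⬝ᵥ w i') = 0 := by
      have : ((∑ i', Complex.normSq (star r ⬝ᵥ w i') : ℝ) : ℂ) = 0 := by
        push_cast
        rw [← key]
        exact Finset.sum_congr rfl fun i' _ => by
          rw [← Complex.mul_conj]; rfl
      exact_mod_cast this
    intro i'
    have := (Finset.sum_eq_zero_iff_of_nonneg
      (fun j _ => Complex.normSq_nonneg _)).mp hre i' (Finset.mem_univ _)
    exact Complex.normSq_eq_zero.mp this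
  have hrw : star r ⬝ᵥ r = 0 := by
    have h3 := key2 i
    have : star r ⬝ᵥ w i = star r ⬝ᵥ r + c * (star r ⬝ᵥ y) := by
      have : w i = r + c • y := by rw [hrdef]; abel
      rw [this, dotProduct_add, dotProduct_smul, smul_eq_mul]
    rw [this, hry, mul_zero, add_zero] at h3
    exact h3
  have hr0 : r = 0 := dotProduct_star_self_eq_zero.mp hrw
  have := sub_eq_zero.mp (hrdef ▸ hr0)
  rw [this]

/-- if a dependence has one zero coefficient, they are all zero -/
lemma aux_dep_zero {n : ℕ} {x : Fin (n + 1) → (Fin n → ℂ)} (hgp : InGeneralPosition x)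
    (j₀ : Fin (n + 1)) (g : Fin (n + 1) → ℂ) (h0 : g j₀ = 0)
    (hg : ∑ j, g j • x j = 0) : ∀ j, g j = 0 := by
  classical
  set t : Finset (Fin (n + 1)) := Finset.univ.erase j₀ with htdef
  have hcard : t.card = n := by
    simp [htdef, Finset.card_erase_of_mem]
  have hli := hgp t hcard
  rw [Fintype.linearIndependent_iff] at hli
  have hsum : ∑ i : t, g i.1 • x i.1 = 0 := by
    rw [Finset.univ_eq_attach, Finset.sum_attach t (fun j => g j • x j)]
    have h7 := Finset.sum_erase_add Finset.univ (fun j => g j • x j) (Finset.mem_univ j₀)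
    simp only [h0, zero_smul, add_zero, hg] at h7
    exact h7
  have hall := hli (fun i => g i.1) hsum
  intro j
  by_cases hj : j = j₀
  · rw [hj]; exact h0
  · exact hall ⟨j, by simp [htdef, hj]⟩

/-- existence of a dependence with all coefficients nonzero -/
lemma aux_exists_dep {n : ℕ} {x : Fin (n + 1) → (Fin n → ℂ)} (hgp : InGeneralPosition x) :
    ∃ α : Fin (n + 1) → ℂ, (∀ j, α j ≠ 0) ∧ ∑ j, α j • x j = 0 := by
  have hnli : ¬ LinearIndependent ℂ x := by
    intro h
    have h1 := h.fintype_card_le_finrank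
    rw [Module.finrank_fin_fun] at h1
    simp at h1
  rw [Fintype.not_linearIndependent_iff] at hnli
  obtain ⟨g, hgsum, j₁, hj₁⟩ := hnli
  refine ⟨g, fun j => ?_, hgsum⟩
  intro hgj
  exact hj₁ (aux_dep_zero hgp j g hgj hgsum j₁)

/-- the first n vectors of a family in general position are linearly independent -/
lemma aux_li_cast {n : ℕ} {x : Fin (n + 1) → (Fin n → ℂ)} (hgp : InGeneralPosition x) :
    LinearIndependent ℂ (fun j : Fin n => x (Fin.castSucc j)) := by
  rw [Fintype.linearIndependent_iff]
  intro g hg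
  set G : Fin (n + 1) → ℂ := Fin.lastCases 0 g with hGdef
  have hGlast : G (Fin.last n) = 0 := by simp [hGdef]
  have hGcast : ∀ i : Fin n, G (Fin.castSucc i) = g i := by
    intro i; simp [hGdef]
  have hsum : ∑ j, G j • x j = 0 := by
    rw [Fin.sum_univ_castSucc]
    simp only [hGcast, hGlast, zero_smul, add_zero]
    exact hg
  intro i
  rw [← hGcast i]
  exact aux_dep_zero hgp (Fin.last n) G hGlast hsum _

/-- two matrices agreeing on a linearly independent family of n vectors in ℂⁿ are equal -/
lemma aux_matrix_ext {n : ℕ} {e : Fin n → (Fin n → ℂ)} (hli : LinearIndependent ℂ e)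
    {M N : Matrix (Fin n) (Fin n) ℂ} (h : ∀ j, M.mulVec (e j) = N.mulVec (e j)) :
    M = N := by
  have hsp : Submodule.span ℂ (Set.range e) = ⊤ :=
    hli.span_eq_top_of_card_eq_finrank' (by simp [Module.finrank_fin_fun])
  have hlin : M.mulVecLin = N.mulVecLin := by
    apply LinearMap.ext_on hsp
    rintro v ⟨j, rfl⟩
    simpa [Matrix.mulVecLin_apply] using h j
  ext a b
  have h2 := congrFun (congrArg (fun f : (Fin n → ℂ) →ₗ[ℂ] (Fin n → ℂ) => (f : (Fin n → ℂ) → (Fin n → ℂ))) hlin) (Pi.single b 1)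
  have h3 := congrFun h2 a
  simpa [Matrix.mulVecLin_apply, Matrix.mulVec_single] using h3

/-- conjugation of a rank-one matrix -/
lemma aux_conj_vecMulVec {n : ℕ} (N : Matrix (Fin n) (Fin n) ℂ) (u : Fin n → ℂ) :
    N * Matrix.vecMulVec u (star u) * Nᴴ
      = Matrix.vecMulVec (N.mulVec u) (star (N.mulVec u)) := by
  ext i j
  simp only [Matrix.mul_apply, Matrix.vecMulVec_apply, Matrix.conjTranspose_apply,
    Matrix.mulVec, dotProduct, Pi.star_apply, Finset.sum_mul, Finset.mul_sum,
    star_sum, star_mul']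
  refine Finset.sum_congr rfl fun k _ => Finset.sum_congr rfl fun l _ => by ring

lemma aux_trace_mul_std {n : ℕ} (M : Matrix (Fin n) (Fin n) ℂ) (i j : Fin n) :
    (M * Matrix.single i j 1).trace = M j i := by
  classical
  simp [Matrix.trace, Matrix.diag, Matrix.mul_apply, Matrix.single,
    Finset.sum_ite_eq, ite_and]

end Aux

/-- If a trace-preserving completely positive map A on an
n-dimensional Hilbert space maps n+1 pure states in general position to pure
states in general position, then A is unitary: Aρ = U†ρU with U unitary. -/
theorem stmt_16 (n s : ℕ)
    (A : Matrix (Fin n) (Fin n) ℂ →ₗ[ℂ] Matrix (Fin n) (Fin n) ℂ)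
    (V : Fin s → Matrix (Fin n) (Fin n) ℂ)
    (hA : ∀ ρ, A ρ = ∑ i, (V i)ᴴ * ρ * V i)
    (htr : ∀ ρ, (A ρ).trace = ρ.trace)
    (x : Fin (n + 1) → (Fin n → ℂ))
    (hx_unit : ∀ j, star (x j) ⬝ᵥ x j = 1)
    (hx_gp : InGeneralPosition x)
    (y : Fin (n + 1) → (Fin n → ℂ))
    (hy_unit : ∀ j, star (y j) ⬝ᵥ y j = 1)
    (hy_gp : InGeneralPosition y)
    (him : ∀ j, A (Matrix.vecMulVec (x j) (star (x j)))
      = Matrix.vecMulVec (y j) (star (y j))) :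
    ∃ U : Matrix (Fin n) (Fin n) ℂ, U ∈ Matrix.unitaryGroup (Fin n) ℂ ∧
      ∀ ρ, A ρ = Uᴴ * ρ * U := by
  classical
  rcases Nat.eq_zero_or_pos n with rfl | hn
  · have h0 := hx_unit 0
    simp [dotProduct] at h0
  -- the vectors (V i)ᴴ xⱼ
  set w : Fin s → Fin (n + 1) → (Fin n → ℂ) := fun i j => (V i)ᴴ.mulVec (x j) with hwdef
  have him' : ∀ j, ∑ i, Matrix.vecMulVec (w i j) (star (w i j))
      = Matrix.vecMulVec (y j) (star (y j)) := by
    intro j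
    rw [← him j, hA]
    refine Finset.sum_congr rfl fun i _ => ?_
    have h1 := aux_conj_vecMulVec (V i)ᴴ (x j)
    rw [Matrix.conjTranspose_conjTranspose] at h1
    exact h1.symm
  -- coefficients
  set c : Fin s → Fin (n + 1) → ℂ := fun i j => star (y j) ⬝ᵥ w i j with hcdef
  have hc : ∀ i j, w i j = c i j • y j := fun i j =>
    aux_rank_one (fun i => w i j) (y j) (hy_unit j) (him' j) i
  obtain ⟨α, hα, hαsum⟩ := aux_exists_dep hx_gp
  obtain ⟨β, hβ, hβsum⟩ := aux_exists_dep hy_gp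
  -- each Kraus operator gives a dependence on the y's
  have hdep : ∀ i, ∑ j, (α j * c i j) • y j = 0 := by
    intro i
    have h2 : ∑ j, α j • w i j = 0 := by
      have h3 := congrArg (V i)ᴴ.mulVecLin hαsum
      simpa [map_sum, map_smul, Matrix.mulVecLin_apply, hwdef] using h3
    rw [← h2]
    exact Finset.sum_congr rfl fun j _ => by rw [hc i j, smul_smul]
  -- dependences on y are proportional to β
  have hprop : ∀ γ : Fin (n + 1) → ℂ, ∑ j, γ j • y j = 0 →
      ∀ j, γ j = γ (Fin.last n) / β (Fin.last n) * β j := by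
    intro γ hγ j
    set d : ℂ := γ (Fin.last n) / β (Fin.last n) with hddef
    have h0 : (γ - d • β) (Fin.last n) = 0 := by
      simp [hddef, div_mul_cancel₀ _ (hβ (Fin.last n))]
    have hsum : ∑ j, (γ - d • β) j • y j = 0 := by
      have : ∀ j, (γ - d • β) j • y j = γ j • y j - d • (β j • y j) := by
        intro j; simp [sub_smul, smul_smul]
      simp only [this, Finset.sum_sub_distrib, hγ, ← Finset.smul_sum, hβsum, smul_zero,
        sub_zero]
    have := aux_dep_zero hy_gp (Fin.last n) _ h0 hsum j
    have h4 : γ j - d * β j = 0 := by simpa using this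
    linear_combination h4
  obtain ⟨t, htspec⟩ : ∃ t : Fin s → ℂ,
      ∀ i, t i = α (Fin.last n) * c i (Fin.last n) / β (Fin.last n) :=
    ⟨_, fun i => rfl⟩
  have hct : ∀ i j, c i j = t i * β j / α j := by
    intro i j
    have h5 := hprop (fun j => α j * c i j) (hdep i) j
    rw [eq_div_iff (hα j)]
    rw [htspec i]
    rw [mul_comm (c i j) (α j), h5]
  -- some Kraus operator is nonzero
  have hex : ∃ i₀, t i₀ ≠ 0 := by
    by_contra hcon
    push_neg at hcon
    have hall : ∀ i, w i (Fin.last n) = 0 := by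
      intro i
      have hc0 : c i (Fin.last n) = 0 := by rw [hct]; simp [hcon i]
      rw [hc i (Fin.last n), hc0, zero_smul]
    have h0 := him' (Fin.last n)
    have hzero : ∀ i ∈ (Finset.univ : Finset (Fin s)),
        Matrix.vecMulVec (w i (Fin.last n)) (star (w i (Fin.last n))) = 0 := by
      intro i _
      rw [hall i]
      ext a b
      simp [Matrix.vecMulVec_apply]
    rw [Finset.sum_eq_zero hzero] at h0
    have h1 := congrArg Matrix.trace h0
    have h2 := hy_unit (Fin.last n)
    rw [Matrix.trace_zero] at h1
    simp only [Matrix.trace, Matrix.diag, Matrix.vecMulVec_apply, Pi.star_apply] at h1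
    simp only [dotProduct, Pi.star_apply] at h2
    rw [Finset.sum_congr rfl (fun k _ => mul_comm (y (Fin.last n) k)
      (star (y (Fin.last n) k)))] at h1
    rw [h2] at h1
    exact zero_ne_one h1
  obtain ⟨i₀, hi₀⟩ := hex
  set W : Matrix (Fin n) (Fin n) ℂ := (V i₀)ᴴ with hWdef
  obtain ⟨μ, hμspec⟩ : ∃ μ : Fin s → ℂ, ∀ i, μ i = t i / t i₀ := ⟨_, fun i => rfl⟩
  have hμc : ∀ i j, c i j = μ i * c i₀ j := by
    intro i j
    rw [hct i j, hct i₀ j, hμspec i]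
    field_simp
  -- all Kraus operators are multiples of W
  have hVW : ∀ i, (V i)ᴴ = μ i • W := by
    intro i
    have hli : LinearIndependent ℂ (fun j : Fin n => x (Fin.castSucc j)) :=
      aux_li_cast hx_gp
    refine aux_matrix_ext hli fun j => ?_
    have hLHS : (V i)ᴴ.mulVec (x (Fin.castSucc j)) = c i (Fin.castSucc j) • y (Fin.castSucc j) :=
      hc i (Fin.castSucc j)
    have hRHS : (μ i • W).mulVec (x (Fin.castSucc j))
        = μ i • (c i₀ (Fin.castSucc j) • y (Fin.castSucc j)) := by
      rw [Matrix.smul_mulVec]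
      congr 1
      exact hc i₀ (Fin.castSucc j)
    rw [hLHS, hRHS, smul_smul, ← hμc]
  -- the channel in terms of W
  have hAW : ∀ ρ, A ρ = (∑ i, μ i * star (μ i)) • (W * ρ * Wᴴ) := by
    intro ρ
    rw [hA, Finset.sum_smul]
    refine Finset.sum_congr rfl fun i _ => ?_
    have h1 : V i = star (μ i) • Wᴴ := by
      have h2 := congrArg Matrix.conjTranspose (hVW i)
      rw [Matrix.conjTranspose_conjTranspose, Matrix.conjTranspose_smul] at h2
      exact h2
    rw [hVW i, h1, Matrix.smul_mul, Matrix.smul_mul, Matrix.mul_smul, smul_smul]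
  set S : ℝ := ∑ i, Complex.normSq (μ i) with hSdef
  have hS0 : 0 ≤ S := Finset.sum_nonneg fun _ _ => Complex.normSq_nonneg _
  have hS : (∑ i, μ i * star (μ i)) = (S : ℂ) := by
    rw [hSdef]
    push_cast
    exact Finset.sum_congr rfl fun i _ => by rw [← Complex.mul_conj]; rfl
  set T : Matrix (Fin n) (Fin n) ℂ := (Real.sqrt S : ℂ) • W with hTdef
  have hAT : ∀ ρ, A ρ = T * ρ * Tᴴ := by
    intro ρ
    rw [hAW, hS, hTdef, Matrix.conjTranspose_smul, Matrix.smul_mul, Matrix.smul_mul,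
      Matrix.mul_smul, smul_smul]
    congr 1
    rw [Complex.star_def, Complex.conj_ofReal, ← Complex.ofReal_mul,
      Real.mul_self_sqrt hS0]
  have htr' : ∀ ρ, (T * ρ * Tᴴ).trace = ρ.trace := fun ρ => by rw [← hAT, htr]
  have hTT : Tᴴ * T = 1 := by
    ext a b
    have h1 := htr' (Matrix.single b a 1)
    rw [Matrix.trace_mul_cycle] at h1
    rw [aux_trace_mul_std (Tᴴ * T) b a] at h1
    rw [h1]
    simp [Matrix.trace, Matrix.diag, Matrix.single, Matrix.one_apply, ite_and,
      eq_comm]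
  have hTT2 : T * Tᴴ = 1 := mul_eq_one_comm.mp hTT
  refine ⟨Tᴴ, ?_, fun ρ => by rw [hAT, Matrix.conjTranspose_conjTranspose]⟩
  constructor
  · rw [Matrix.star_eq_conjTranspose, Matrix.conjTranspose_conjTranspose]
    exact hTT2
  · rw [Matrix.star_eq_conjTranspose, Matrix.conjTranspose_conjTranspose]
    exact hTT
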